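/- If K is not spherically complete, then the space ℓ∞ of bounded sequences over K with the supremum norm is not of universal disposition for the class U_FNA: there exist a one-dimensional subspace X = span(e₁) ⊆ ℓ∞, a two-dimensional non-archimedean normed space Y over K containing no two non-zero orthogonal vectors, and an isometry i : X → Y, such that no isometry f : Y → ℓ∞ satisfies f(i(x)) = x for all x ∈ X. -/

import Mathlib

open Metric Set

noncomputable section

variable (K : Type) [NontriviallyNormedField K] [IsUltrametricDist K]

/-- A linear map is an `ε`-isometry if `(1+ε)⁻¹ < ‖f x‖ < 1+ε` whenever `‖x‖ = 1`. -/
def IsEpsIsometry {E F : Type} [NormedAddCommGroup E] [NormedAddCommGroup F]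
    [NormedSpace K E] [NormedSpace K F] (ε : ℝ) (f : E →ₗ[K] F) : Prop :=
  ∀ x : E, ‖x‖ = 1 → (1 + ε)⁻¹ < ‖f x‖ ∧ ‖f x‖ < 1 + ε

/-- A non-archimedean Banach space `E` over `K` is of almost universal disposition for the
class `U_FNA` of all finite-dimensional non-archimedean normed spaces over `K`. -/
def IsAUD (E : Type) [NormedAddCommGroup E] [NormedSpace K E] : Prop :=
  ∀ (Y : Type) [NormedAddCommGroup Y] [NormedSpace K Y] [IsUltrametricDist Y]
    [FiniteDimensional K Y] (X : Submodule K E) (g : X →ₗ[K] Y),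
    (∀ x : X, ‖g x‖ = ‖(x : E)‖) →
    ∀ ε : ℝ, 0 < ε → ε < 1 →
      ∃ f : Y →ₗ[K] E, IsEpsIsometry K ε f ∧ ∀ x : X, f (g (x : X)) = (x : E)

/-- `E` is of universal disposition for the class `U_FNA`. -/
def IsUD (E : Type) [NormedAddCommGroup E] [NormedSpace K E] : Prop :=
  ∀ (Y : Type) [NormedAddCommGroup Y] [NormedSpace K Y] [IsUltrametricDist Y]
    [FiniteDimensional K Y] (X : Submodule K E) (j : X →ₗ[K] Y),
    (∀ x : X, ‖j x‖ = ‖(x : E)‖) →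
      ∃ f : Y →ₗ[K] E, (∀ y : Y, ‖f y‖ = ‖y‖) ∧ ∀ x : X, f (j (x : X)) = (x : E)

/-- A normed space is of countable type if it contains a countable subset whose linear
span is dense. -/
def CountableType (E : Type) [NormedAddCommGroup E] [NormedSpace K E] : Prop :=
  ∃ S : Set E, S.Countable ∧ Dense ((Submodule.span K S : Submodule K E) : Set E)

/-- A metric space is spherically complete if every nested sequence of closed balls has
non-empty intersection. -/
def SphComplete (α : Type) [MetricSpace α] : Prop :=
  ∀ (c : ℕ → α) (r : ℕ → ℝ), (∀ n, 0 ≤ r n) →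
    (∀ n, closedBall (c (n + 1)) (r (n + 1)) ⊆ closedBall (c n) (r n)) →
    (⋂ n, closedBall (c n) (r n)).Nonempty

/-- The set of non-zero norm values of a normed space (e.g. the value group `|K*|`). -/
def NormValues (E : Type) [NormedAddCommGroup E] : Set ℝ :=
  {t : ℝ | ∃ x : E, x ≠ 0 ∧ ‖x‖ = t}

/-- `K` is densely valued: `|K*|` is a dense subset of `(0,∞)`. -/
def DenselyValued : Prop :=
  Ioi (0 : ℝ) ⊆ closure (NormValues K)

end
open scoped ENNReal

/-- The space `ℓ∞` of bounded sequences over `K` with the supremum norm. -/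
noncomputable def Linf (K : Type) [NontriviallyNormedField K] : Type :=
  lp (fun _ : ℕ => K) ∞

noncomputable instance (K : Type) [NontriviallyNormedField K] : NormedAddCommGroup (Linf K) :=
  inferInstanceAs (NormedAddCommGroup (lp (fun _ : ℕ => K) ∞))

noncomputable instance (K : Type) [NontriviallyNormedField K] : NormedSpace K (Linf K) :=
  inferInstanceAs (NormedSpace K (lp (fun _ : ℕ => K) ∞))

/-- `e₁ = (1,0,0,…) ∈ ℓ∞`. -/
noncomputable def linfE1 (K : Type) [NontriviallyNormedField K] : Linf K :=
  lp.single ∞ 0 1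

section Development

open IsUltrametricDist

variable {K : Type} [NontriviallyNormedField K] [IsUltrametricDist K]

private lemma norm_add_eq_left' {a b : K} (h : ‖b‖ < ‖a‖) : ‖a + b‖ = ‖a‖ := by
  refine le_antisymm ((norm_add_le_max a b).trans (max_le le_rfl h.le)) ?_
  by_contra hlt
  push_neg at hlt
  have h2 : ‖a‖ ≤ max ‖a + b‖ ‖b‖ := by
    simpa using norm_add_le_max (a + b) (-b)
  rcases max_cases ‖a + b‖ ‖b‖ with ⟨he, _⟩ | ⟨he, _⟩ <;> rw [he] at h2 <;> linarith

/-- A nested sequence of closed balls in `K` with empty intersection. -/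
structure BadSeq (K : Type) [NontriviallyNormedField K] where
  c : ℕ → K
  r : ℕ → ℝ
  r_nonneg : ∀ n, 0 ≤ r n
  nested : ∀ n, closedBall (c (n+1)) (r (n+1)) ⊆ closedBall (c n) (r n)
  empt : ∀ x : K, ∃ n, r n < ‖x - c n‖

namespace BadSeq

variable (B : BadSeq K)

lemma ball_mono {n m : ℕ} (h : n ≤ m) :
    closedBall (B.c m) (B.r m) ⊆ closedBall (B.c n) (B.r n) := by
  induction m, h using Nat.le_induction with
  | base => exact subset_rfl
  | succ m hm ih => exact (B.nested m).trans ih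

lemma c_dist {n m : ℕ} (h : n ≤ m) : ‖B.c m - B.c n‖ ≤ B.r n := by
  have := B.ball_mono h (mem_closedBall_self (B.r_nonneg m))
  simpa [mem_closedBall, dist_eq_norm] using this

noncomputable def N (u : K) : ℕ := (B.empt u).choose

lemma N_spec (u : K) : B.r (B.N u) < ‖u - B.c (B.N u)‖ := (B.empt u).choose_spec

noncomputable def psi (u : K) : ℝ := ‖u - B.c (B.N u)‖

lemma stable {u : K} {n m : ℕ} (hn : B.r n < ‖u - B.c n‖) (h : n ≤ m) :
    ‖u - B.c m‖ = ‖u - B.c n‖ := by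
  have key : u - B.c m = (u - B.c n) + (B.c n - B.c m) := by ring
  rw [key]
  apply norm_add_eq_left'
  calc ‖B.c n - B.c m‖ = ‖B.c m - B.c n‖ := norm_sub_rev _ _
    _ ≤ B.r n := B.c_dist h
    _ < _ := hn

lemma psi_eq {u : K} {n : ℕ} (hn : B.r n < ‖u - B.c n‖) : B.psi u = ‖u - B.c n‖ := by
  rcases le_total n (B.N u) with h | h
  · exact B.stable hn h
  · exact (B.stable (B.N_spec u) h).symm

lemma psi_eq' {u : K} {m : ℕ} (h : B.N u ≤ m) : B.psi u = ‖u - B.c m‖ :=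
  (B.stable (B.N_spec u) h).symm

lemma r_lt_psi (u : K) : B.r (B.N u) < B.psi u := B.N_spec u

lemma psi_pos (u : K) : 0 < B.psi u := (B.r_nonneg _).trans_lt (B.N_spec u)

lemma psi_c_le (n : ℕ) : B.psi (B.c n) ≤ B.r n := by
  rw [B.psi_eq' (le_max_right n (B.N (B.c n)))]
  calc ‖B.c n - B.c (max n (B.N (B.c n)))‖
      = ‖B.c (max n (B.N (B.c n))) - B.c n‖ := norm_sub_rev _ _
    _ ≤ B.r n := B.c_dist (le_max_left _ _)

lemma psi_cN_lt (u : K) : B.psi (B.c (B.N u)) < B.psi u :=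
  (B.psi_c_le _).trans_lt (B.r_lt_psi u)

open Classical in
noncomputable def nu (v : K × K) : ℝ := if v.2 = 0 then ‖v.1‖ else ‖v.2‖ * B.psi (v.1 / v.2)

lemma nu_snd_zero (a : K) : B.nu (a, 0) = ‖a‖ := if_pos rfl

lemma nu_snd_ne {b : K} (a : K) (hb : b ≠ 0) : B.nu (a, b) = ‖b‖ * B.psi (a / b) := if_neg hb

lemma nu_eventually (v : K × K) : ∃ n0, ∀ m, n0 ≤ m → B.nu v = ‖v.1 - v.2 * B.c m‖ := by
  obtain ⟨a, b⟩ := v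
  by_cases hb : b = 0
  · exact ⟨0, fun m _ => by simp [nu, hb]⟩
  · refine ⟨B.N (a / b), fun m hm => ?_⟩
    rw [B.nu_snd_ne a hb, B.psi_eq' hm, ← norm_mul]
    congr 1
    field_simp

lemma nu_nonneg (v : K × K) : 0 ≤ B.nu v := by
  obtain ⟨n0, h⟩ := B.nu_eventually v
  rw [h n0 le_rfl]
  exact norm_nonneg _

lemma nu_pos {v : K × K} (hv : v ≠ 0) : 0 < B.nu v := by
  obtain ⟨a, b⟩ := v
  by_cases hb : b = 0
  · subst hb
    rw [B.nu_snd_zero]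
    have ha : a ≠ 0 := by
      intro h; exact hv (by simp [h])
    exact norm_pos_iff.mpr ha
  · rw [B.nu_snd_ne a hb]
    exact mul_pos (norm_pos_iff.mpr hb) (B.psi_pos _)

lemma nu_add_le (v w : K × K) : B.nu (v + w) ≤ max (B.nu v) (B.nu w) := by
  obtain ⟨n1, h1⟩ := B.nu_eventually v
  obtain ⟨n2, h2⟩ := B.nu_eventually w
  obtain ⟨n3, h3⟩ := B.nu_eventually (v + w)
  set m := max (max n1 n2) n3 with hm
  rw [h1 m ((le_max_left _ _).trans (le_max_left _ _)),
    h2 m ((le_max_right _ _).trans (le_max_left _ _)), h3 m (le_max_right _ _)]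
  have e : (v + w).1 - (v + w).2 * B.c m
      = (v.1 - v.2 * B.c m) + (w.1 - w.2 * B.c m) := by
    rw [Prod.fst_add, Prod.snd_add]; ring
  rw [e]
  exact norm_add_le_max _ _

lemma nu_smul (k : K) (v : K × K) : B.nu (k • v) = ‖k‖ * B.nu v := by
  obtain ⟨n1, h1⟩ := B.nu_eventually v
  obtain ⟨n2, h2⟩ := B.nu_eventually (k • v)
  set m := max n1 n2 with hm
  rw [h1 m (le_max_left _ _), h2 m (le_max_right _ _)]
  have e : (k • v).1 - (k • v).2 * B.c m = k * (v.1 - v.2 * B.c m) := by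
    rw [Prod.smul_fst, Prod.smul_snd, smul_eq_mul, smul_eq_mul]; ring
  rw [e, norm_mul]

end BadSeq

/-- The type synonym `K²` carrying the norm `nu`. -/
def YB {K : Type} [NontriviallyNormedField K] (B : BadSeq K) : Type := K × K

variable (B : BadSeq K)

instance : AddCommGroup (YB B) := inferInstanceAs (AddCommGroup (K × K))
instance : Module K (YB B) := inferInstanceAs (Module K (K × K))

noncomputable def ybNorm : AddGroupNorm (YB B) where
  toFun v := B.nu v
  map_zero' := by
    show B.nu ((0 : K), (0 : K)) = 0
    rw [B.nu_snd_zero, norm_zero]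
  add_le' v w :=
    (B.nu_add_le v w).trans (max_le_add_of_nonneg (B.nu_nonneg v) (B.nu_nonneg w))
  neg' v := by
    have h := B.nu_smul (-1 : K) v
    rw [norm_neg, norm_one, one_mul] at h
    rw [← h]; congr 1; exact (neg_one_smul K (v : K × K)).symm
  eq_zero_of_map_eq_zero' v h := by
    by_contra hv
    exact absurd h (ne_of_gt (B.nu_pos hv))

noncomputable instance : NormedAddCommGroup (YB B) := (ybNorm B).toNormedAddCommGroup

lemma yb_norm_def (v : YB B) : ‖v‖ = B.nu v := rfl

noncomputable instance : NormedSpace K (YB B) :=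
  { (inferInstance : Module K (YB B)) with
    norm_smul_le := fun k v => le_of_eq (B.nu_smul k v) }

instance : IsUltrametricDist (YB B) :=
  IsUltrametricDist.isUltrametricDist_of_forall_norm_add_le_max_norm
    (fun v w => B.nu_add_le v w)

instance : FiniteDimensional K (YB B) := inferInstanceAs (FiniteDimensional K (K × K))

lemma yb_finrank : Module.finrank K (YB B) = 2 := by
  have h : Module.finrank K (K × K) = 2 := by
    simp [Module.finrank_prod]
  exact h

end Development

section LinfFacts

variable {K : Type} [NontriviallyNormedField K]

/-- View an element of `Linf K` as an element of the `lp` space. -/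
abbrev toLp (x : Linf K) : lp (fun _ : ℕ => K) ∞ := x

lemma e1_apply_zero : toLp (linfE1 K) 0 = 1 := lp.single_apply_self ∞ 0 1

lemma e1_apply_ne {j : ℕ} (h : j ≠ 0) : toLp (linfE1 K) j = 0 := lp.single_apply_ne ∞ 0 1 h

lemma e1_norm : ‖linfE1 K‖ = 1 := by
  rw [show ‖linfE1 K‖ = ⨆ i, ‖toLp (linfE1 K) i‖ from lp.norm_eq_ciSup _]
  apply le_antisymm
  · apply ciSup_le
    intro i
    rcases eq_or_ne i 0 with h | h
    · rw [h, e1_apply_zero]; simp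
    · rw [e1_apply_ne h]; simp
  · have hb : BddAbove (range fun i => ‖toLp (linfE1 K) i‖) := by
      refine ⟨1, ?_⟩
      rintro t ⟨i, rfl⟩
      rcases eq_or_ne i 0 with h | h
      · rw [h]; simp only [e1_apply_zero]; simp
      · simp only [e1_apply_ne h]; simp
    have := le_ciSup hb 0
    rwa [e1_apply_zero, norm_one] at this

lemma norm_span_e1 {x : (Submodule.span K {linfE1 K} : Submodule K (Linf K))} {k : K}
    (hk : (x : Linf K) = k • linfE1 K) : ‖(x : Linf K)‖ = ‖k‖ ∧ toLp (x : Linf K) 0 = k := by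
  constructor
  · rw [hk, norm_smul, e1_norm, mul_one]
  · rw [show toLp (x : Linf K) = toLp (k • linfE1 K) from congrArg toLp hk,
      show toLp (k • linfE1 K) = k • toLp (linfE1 K) from rfl, lp.coeFn_smul, Pi.smul_apply,
      e1_apply_zero, smul_eq_mul, mul_one]

end LinfFacts

section Witness

open IsUltrametricDist

variable {K : Type} [NontriviallyNormedField K] [IsUltrametricDist K] (B : BadSeq K)

noncomputable def iMap : (Submodule.span K {linfE1 K} : Submodule K (Linf K)) →ₗ[K] YB B where
  toFun x := ((toLp (x : Linf K) 0, 0) : K × K)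
  map_add' x y := by
    show ((toLp ((x + y : _) : Linf K) 0, (0:K)) : K × K)
        = ((toLp (x : Linf K) 0, (0:K)) : K × K) + ((toLp (y : Linf K) 0, (0:K)) : K × K)
    have h : toLp ((x + y : _) : Linf K) = toLp (x : Linf K) + toLp (y : Linf K) := rfl
    rw [h, lp.coeFn_add, Pi.add_apply, Prod.mk_add_mk, add_zero]
  map_smul' k x := by
    show ((toLp ((k • x : _) : Linf K) 0, (0:K)) : K × K)
        = k • ((toLp (x : Linf K) 0, (0:K)) : K × K)
    have h : toLp ((k • x : _) : Linf K) = k • toLp (x : Linf K) := rfl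
    rw [h, lp.coeFn_smul, Pi.smul_apply, Prod.smul_mk, smul_zero]

lemma iMap_isom (x : (Submodule.span K {linfE1 K} : Submodule K (Linf K))) :
    ‖iMap B x‖ = ‖(x : Linf K)‖ := by
  obtain ⟨k, hk⟩ := Submodule.mem_span_singleton.mp x.2
  obtain ⟨h1, h2⟩ := norm_span_e1 (x := x) hk.symm
  rw [h1]
  show B.nu (toLp (x : Linf K) 0, 0) = ‖k‖
  rw [h2, B.nu_snd_zero]

lemma no_ext : ¬ ∃ f : YB B →ₗ[K] Linf K, (∀ v : YB B, ‖f v‖ = ‖v‖) ∧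
    ∀ x : (Submodule.span K {linfE1 K} : Submodule K (Linf K)),
      f (iMap B x) = (x : Linf K) := by
  rintro ⟨f, hiso, hext⟩
  have he1mem : linfE1 K ∈ Submodule.span K {linfE1 K} :=
    Submodule.mem_span_singleton_self _
  set e1s : (Submodule.span K {linfE1 K} : Submodule K (Linf K)) := ⟨linfE1 K, he1mem⟩
    with he1s
  have h1 : iMap B e1s = (((1:K), (0:K)) : K × K) := by
    show ((toLp (linfE1 K) 0, (0:K)) : K × K) = ((1:K), (0:K))
    rw [e1_apply_zero]
  have hf1 : f ((((1:K),(0:K)) : K × K) : YB B) = linfE1 K := by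
    rw [← h1, hext e1s]
  set s : Linf K := f ((((0:K),(1:K)) : K × K) : YB B) with hs
  have key : ∀ n, ‖B.c n + toLp s 0‖ ≤ B.r n := by
    intro n
    have hv : ((B.c n, (1:K)) : K × K)
        = (B.c n) • (((1:K),(0:K)) : K × K) + (((0:K),(1:K)) : K × K) := by
      simp [Prod.ext_iff]
    have hfv : f (((B.c n, (1:K)) : K × K) : YB B) = B.c n • linfE1 K + s := by
      rw [show (((B.c n, (1:K)) : K × K) : YB B)
          = (B.c n) • ((((1:K),(0:K)) : K × K) : YB B) + ((((0:K),(1:K)) : K × K) : YB B)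
          from hv]
      erw [map_add, map_smul, hf1]
    have hnorm : ‖f (((B.c n, (1:K)) : K × K) : YB B)‖ = B.psi (B.c n) := by
      refine (hiso _).trans ?_
      show B.nu (B.c n, 1) = B.psi (B.c n)
      rw [B.nu_snd_ne _ one_ne_zero, norm_one, one_mul, div_one]
    have hcoord : ‖toLp (B.c n • linfE1 K + s) 0‖ ≤ B.psi (B.c n) := by
      rw [← hnorm, hfv]
      exact lp.norm_apply_le_norm ENNReal.top_ne_zero (toLp (B.c n • linfE1 K + s)) 0
    have happ : toLp (B.c n • linfE1 K + s) 0 = B.c n + toLp s 0 := by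
      have h : toLp (B.c n • linfE1 K + s) = B.c n • toLp (linfE1 K) + toLp s := rfl
      rw [h, lp.coeFn_add, Pi.add_apply, lp.coeFn_smul, Pi.smul_apply, e1_apply_zero,
        smul_eq_mul, mul_one]
    rw [happ] at hcoord
    exact hcoord.trans (B.psi_c_le n)
  obtain ⟨n, hn⟩ := B.empt (-(toLp s 0))
  have h2 : ‖-(toLp s 0) - B.c n‖ = ‖B.c n + toLp s 0‖ := by
    rw [← norm_neg]; congr 1; ring
  rw [h2] at hn
  exact absurd (key n) (not_le.mpr hn)

lemma helper1 (x1 y1 y2 : K) (hx1 : x1 ≠ 0) (hy2 : y2 ≠ 0)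
    (H : ∀ a b : K, B.nu (a * x1 + b * y1, b * y2)
      = max (B.nu (a * x1, 0)) (B.nu (b * y1, b * y2))) : False := by
  set q := y1 / y2 with hq
  set w := B.c (B.N q) with hwdef
  have hw : B.psi w < B.psi q := B.psi_cN_lt q
  have hH := H ((w * y2 - y1) / x1) 1
  rw [one_mul, one_mul] at hH
  have e1 : (w * y2 - y1) / x1 * x1 + y1 = w * y2 := by field_simp; ring
  rw [e1] at hH
  have e2 : B.nu (w * y2, y2) = ‖y2‖ * B.psi w := by
    rw [B.nu_snd_ne _ hy2, mul_div_cancel_right₀ _ hy2]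
  have e3 : B.nu (y1, y2) = ‖y2‖ * B.psi q := B.nu_snd_ne _ hy2
  rw [e2, e3] at hH
  have hle : ‖y2‖ * B.psi q ≤ ‖y2‖ * B.psi w := hH ▸ le_max_right _ _
  have hy2' : 0 < ‖y2‖ := norm_pos_iff.mpr hy2
  nlinarith [hw, hy2']

lemma helper2 (x1 x2 y1 y2 : K) (hx2 : x2 ≠ 0) (hy2 : y2 ≠ 0)
    (hD : x1 * y2 - x2 * y1 ≠ 0)
    (hle : B.psi (x1 / x2) ≤ B.psi (y1 / y2))
    (H : ∀ a b : K, B.nu (a * x1 + b * y1, a * x2 + b * y2)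
      = max (B.nu (a * x1, a * x2)) (B.nu (b * y1, b * y2))) : False := by
  set p := x1 / x2 with hp
  set q := y1 / y2 with hq
  set w := B.c (B.N p) with hwdef
  have hw : B.psi w < B.psi p := B.psi_cN_lt p
  set D := x1 * y2 - x2 * y1 with hDdef
  set a := (w * y2 - y1) / D with ha
  set b := (x1 - w * x2) / D with hb
  have hc1 : a * x1 + b * y1 = w := by
    rw [ha, hb]; field_simp; ring
  have hc2 : a * x2 + b * y2 = 1 := by
    rw [ha, hb]; field_simp; ring
  have hH := H a b
  rw [hc1, hc2] at hH
  have hL : B.nu (w, 1) = B.psi w := by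
    rw [B.nu_snd_ne _ one_ne_zero, norm_one, one_mul, div_one]
  have hx : B.nu (a * x1, a * x2) = ‖a‖ * (‖x2‖ * B.psi p) := by
    have h : ((a * x1, a * x2) : K × K) = a • ((x1, x2) : K × K) := rfl
    rw [h, B.nu_smul, B.nu_snd_ne _ hx2, hp]
  have hy : B.nu (b * y1, b * y2) = ‖b‖ * (‖y2‖ * B.psi q) := by
    have h : ((b * y1, b * y2) : K × K) = b • ((y1, y2) : K × K) := rfl
    rw [h, B.nu_smul, B.nu_snd_ne _ hy2, hq]
  rw [hL, hx, hy] at hH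
  have hkey : ‖D‖ ≤ max (‖w * y2 - y1‖ * ‖x2‖) (‖x1 - w * x2‖ * ‖y2‖) := by
    have h : D = (x1 - w * x2) * y2 + (w * y2 - y1) * x2 := by rw [hDdef]; ring
    calc ‖D‖ = ‖(x1 - w * x2) * y2 + (w * y2 - y1) * x2‖ := by rw [← h]
      _ ≤ max ‖(x1 - w * x2) * y2‖ ‖(w * y2 - y1) * x2‖ := norm_add_le_max _ _
      _ = max (‖w * y2 - y1‖ * ‖x2‖) (‖x1 - w * x2‖ * ‖y2‖) := by
          rw [norm_mul, norm_mul, max_comm]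
  have hDpos : 0 < ‖D‖ := norm_pos_iff.mpr hD
  have haD : ‖w * y2 - y1‖ = ‖a‖ * ‖D‖ := by
    rw [← norm_mul]; congr 1; rw [ha]; field_simp
  have hbD : ‖x1 - w * x2‖ = ‖b‖ * ‖D‖ := by
    rw [← norm_mul]; congr 1; rw [hb]; field_simp
  rw [haD, hbD] at hkey
  have hfin : B.psi p ≤ B.psi w := by
    rcases le_max_iff.mp hkey with h | h
    · have hax : 1 ≤ ‖a‖ * ‖x2‖ := by
        have h' : ‖D‖ ≤ ‖a‖ * ‖x2‖ * ‖D‖ := by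
          calc ‖D‖ ≤ ‖a‖ * ‖D‖ * ‖x2‖ := h
            _ = ‖a‖ * ‖x2‖ * ‖D‖ := by ring
        nlinarith
      calc B.psi p = 1 * B.psi p := (one_mul _).symm
        _ ≤ (‖a‖ * ‖x2‖) * B.psi p :=
            mul_le_mul_of_nonneg_right hax (B.psi_pos p).le
        _ = ‖a‖ * (‖x2‖ * B.psi p) := by ring
        _ ≤ max (‖a‖ * (‖x2‖ * B.psi p)) (‖b‖ * (‖y2‖ * B.psi q)) := le_max_left _ _
        _ = B.psi w := hH.symm
    · have hbx : 1 ≤ ‖b‖ * ‖y2‖ := by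
        have h' : ‖D‖ ≤ ‖b‖ * ‖y2‖ * ‖D‖ := by
          calc ‖D‖ ≤ ‖b‖ * ‖D‖ * ‖y2‖ := h
            _ = ‖b‖ * ‖y2‖ * ‖D‖ := by ring
        nlinarith
      calc B.psi p ≤ B.psi q := hle
        _ = 1 * B.psi q := (one_mul _).symm
        _ ≤ (‖b‖ * ‖y2‖) * B.psi q :=
            mul_le_mul_of_nonneg_right hbx (B.psi_pos q).le
        _ = ‖b‖ * (‖y2‖ * B.psi q) := by ring
        _ ≤ max (‖a‖ * (‖x2‖ * B.psi p)) (‖b‖ * (‖y2‖ * B.psi q)) := le_max_right _ _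
        _ = B.psi w := hH.symm
  exact absurd hw (not_lt.mpr hfin)

lemma no_orth_pairs (x1 x2 y1 y2 : K) (hx : ¬(x1 = 0 ∧ x2 = 0)) (hy : ¬(y1 = 0 ∧ y2 = 0))
    (H : ∀ a b : K, B.nu (a * x1 + b * y1, a * x2 + b * y2)
      = max (B.nu (a * x1, a * x2)) (B.nu (b * y1, b * y2))) : False := by
  have hxv : ((x1, x2) : K × K) ≠ 0 := by
    intro h
    exact hx ⟨congrArg Prod.fst h, congrArg Prod.snd h⟩
  have hyv : ((y1, y2) : K × K) ≠ 0 := by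
    intro h
    exact hy ⟨congrArg Prod.fst h, congrArg Prod.snd h⟩
  have hnuz : B.nu ((0 : K), (0 : K)) = 0 := by rw [B.nu_snd_zero, norm_zero]
  by_cases hD : x1 * y2 - x2 * y1 = 0
  · -- dependent case: a nontrivial combination vanishes
    by_cases hy2 : y2 = 0
    · have hy1 : y1 ≠ 0 := fun h => hy ⟨h, hy2⟩
      have hH := H y1 (-x1)
      have hx2y1 : x2 * y1 = 0 := by
        have h' := hD; rw [hy2] at h'; linear_combination -h'
      have c1 : y1 * x1 + -x1 * y1 = 0 := by ring
      have c2 : y1 * x2 + -x1 * y2 = 0 := by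
        rw [hy2]; linear_combination hx2y1
      rw [c1, c2, hnuz] at hH
      have hpos : 0 < B.nu (y1 * x1, y1 * x2) := by
        have h : ((y1 * x1, y1 * x2) : K × K) = y1 • ((x1, x2) : K × K) := rfl
        rw [h, B.nu_smul]
        exact mul_pos (norm_pos_iff.mpr hy1) (B.nu_pos hxv)
      have := le_max_left (B.nu (y1 * x1, y1 * x2)) (B.nu (-x1 * y1, -x1 * y2))
      rw [← hH] at this
      linarith
    · have hH := H y2 (-x2)
      have c1 : y2 * x1 + -x2 * y1 = 0 := by linear_combination hD
      have c2 : y2 * x2 + -x2 * y2 = 0 := by ring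
      rw [c1, c2, hnuz] at hH
      have hpos : 0 < B.nu (y2 * x1, y2 * x2) := by
        have h : ((y2 * x1, y2 * x2) : K × K) = y2 • ((x1, x2) : K × K) := rfl
        rw [h, B.nu_smul]
        exact mul_pos (norm_pos_iff.mpr hy2) (B.nu_pos hxv)
      have := le_max_left (B.nu (y2 * x1, y2 * x2)) (B.nu (-x2 * y1, -x2 * y2))
      rw [← hH] at this
      linarith
  · by_cases hx2 : x2 = 0
    · have hy2 : y2 ≠ 0 := fun h => hD (by rw [hx2, h]; ring)
      have hx1 : x1 ≠ 0 := fun h => hD (by rw [hx2, h]; ring)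
      apply helper1 B x1 y1 y2 hx1 hy2
      intro a b
      have h := H a b
      rwa [hx2, mul_zero, zero_add] at h
    · by_cases hy2 : y2 = 0
      · have hy1 : y1 ≠ 0 := fun h => hD (by rw [hy2, h]; ring)
        apply helper1 B y1 x1 x2 hy1 hx2
        intro a b
        have h := H b a
        rw [hy2, mul_zero, add_zero, max_comm, add_comm (b * x1) (a * y1)] at h
        exact h
      · rcases le_total (B.psi (x1 / x2)) (B.psi (y1 / y2)) with hle | hle
        · exact helper2 B x1 x2 y1 y2 hx2 hy2 hD hle H
        · apply helper2 B y1 y2 x1 x2 hy2 hx2 (fun h => hD (by linear_combination -h)) hle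
          intro a b
          have h := H b a
          rw [max_comm, add_comm (b * x1) (a * y1), add_comm (b * x2) (a * y2)] at h
          exact h

lemma yb_no_orth (x y : YB B) (hx : x ≠ 0) (hy : y ≠ 0) :
    ¬ ∀ a b : K, ‖a • x + b • y‖ = max ‖a • x‖ ‖b • y‖ := by
  intro H
  set xp : K × K := x with hxp
  set yp : K × K := y with hyp
  refine no_orth_pairs B xp.1 xp.2 yp.1 yp.2 ?_ ?_ ?_
  · intro ⟨h1, h2⟩
    apply hx
    show xp = (0 : K × K)
    exact Prod.ext h1 h2
  · intro ⟨h1, h2⟩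
    apply hy
    show yp = (0 : K × K)
    exact Prod.ext h1 h2
  · intro a b
    exact H a b

end Witness


/-- A witness that `ℓ∞` is not of universal disposition for `U_FNA`: a two-dimensional
non-archimedean normed space `Y` with no two non-zero orthogonal vectors, together with an
isometry `i : span(e₁) → Y` admitting no isometric extension `f : Y → ℓ∞` with
`f(i(x)) = x`. -/
structure LinfNotUDWitness (K : Type) [NontriviallyNormedField K] [IsUltrametricDist K] where
  Y : Type
  [nacg : NormedAddCommGroup Y]
  [nsp : NormedSpace K Y]
  [ultra : IsUltrametricDist Y]
  dim_eq : Module.finrank K Y = 2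
  no_orth : ∀ x y : Y, x ≠ 0 → y ≠ 0 →
    ¬ ∀ a b : K, ‖a • x + b • y‖ = max ‖a • x‖ ‖b • y‖
  i : (Submodule.span K {linfE1 K} : Submodule K (Linf K)) →ₗ[K] Y
  i_isom : ∀ x : (Submodule.span K {linfE1 K} : Submodule K (Linf K)), ‖i x‖ = ‖(x : Linf K)‖
  no_extension : ¬ ∃ f : Y →ₗ[K] Linf K, (∀ y : Y, ‖f y‖ = ‖y‖) ∧
    ∀ x : (Submodule.span K {linfE1 K} : Submodule K (Linf K)), f (i x) = (x : Linf K)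

/-- If `K` is not spherically complete then `ℓ∞` is not of universal disposition for
`U_FNA`. -/
theorem linf_not_UD_of_not_sphericallyComplete (K : Type) [NontriviallyNormedField K]
    [IsUltrametricDist K] (hK : ¬ SphComplete K) :
    Nonempty (LinfNotUDWitness K) := by
  unfold SphComplete at hK
  push_neg at hK
  obtain ⟨c, r, hr, hnest, hempty⟩ := hK
  have hempt : ∀ x : K, ∃ n, r n < ‖x - c n‖ := by
    intro x
    by_contra h
    push_neg at h
    have hmem : x ∈ ⋂ n, closedBall (c n) (r n) := mem_iInter.mpr fun n => by
      simpa [mem_closedBall, dist_eq_norm] using h n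
    rw [hempty] at hmem
    simpa using hmem
  set B : BadSeq K := ⟨c, r, hr, hnest, hempt⟩ with hB
  exact ⟨{ Y := YB B
           dim_eq := yb_finrank B
           no_orth := yb_no_orth B
           i := iMap B
           i_isom := iMap_isom B
           no_extension := no_ext B }⟩
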